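/- Let K be a directed partial order and ⟨A_k : k ∈ K⟩, ⟨E_k : k ∈ K⟩ systems of complete Boolean algebras such that A_k <∘ A_ℓ, E_k <∘ E_ℓ and A_k <∘ E_k for all k ≤ ℓ, and all squares (A_k; E_k, A_ℓ; E_ℓ) are correct. Then every maximal antichain of ⋃_k A_k remains predense in ⋃_k E_k; i.e., the direct limit of the A_k completely embeds into the direct limit of the E_k. -/
import Mathlib


/-- The projection onto a complete subalgebra `S`: `h(a) = ∏ {b ∈ S : b ≥ a}`. -/
noncomputable def projSub {B : Type*} [CompleteBooleanAlgebra B] (S : Set B) (a : B) : B :=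
  sInf {b | b ∈ S ∧ a ≤ b}

/-- Embeddability of direct limits: given directed systems `⟨A_k⟩`, `⟨E_k⟩` of complete
Boolean algebras (modelled as complete subalgebras of an ambient complete Boolean algebra)
with `A_k ⊆ A_ℓ`, `E_k ⊆ E_ℓ`, `A_k ⊆ E_k`, and all squares `(A_k; E_k, A_ℓ; E_ℓ)`
correct, every maximal antichain of `⋃_k A_k` remains predense in `⋃_k E_k`. -/
theorem stmt11 {B K : Type*} [CompleteBooleanAlgebra B] [Preorder K]
    (hdir : ∀ k l : K, ∃ m, k ≤ m ∧ l ≤ m)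
    (A E : K → Set B)
    (hAinf : ∀ k, ∀ T : Set B, T ⊆ A k → sInf T ∈ A k)
    (hAcompl : ∀ k, ∀ x ∈ A k, xᶜ ∈ A k)
    (hEinf : ∀ k, ∀ T : Set B, T ⊆ E k → sInf T ∈ E k)
    (hEcompl : ∀ k, ∀ x ∈ E k, xᶜ ∈ E k)
    (hAmono : ∀ k l : K, k ≤ l → A k ⊆ A l)
    (hEmono : ∀ k l : K, k ≤ l → E k ⊆ E l)
    (hAE : ∀ k, A k ⊆ E k)
    (hcorrect : ∀ k l : K, k ≤ l → ∀ a ∈ A l, ∀ b ∈ E k,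
      projSub (A k) a ⊓ projSub (A k) b ≠ ⊥ → a ⊓ b ≠ ⊥)
    (M : Set B) (hMsub : M ⊆ ⋃ k, A k) (hM0 : ∀ m ∈ M, m ≠ ⊥)
    (hanti : M.Pairwise fun x y => x ⊓ y = ⊥)
    (hmax : ∀ c ∈ ⋃ k, A k, c ≠ ⊥ → ∃ m ∈ M, m ⊓ c ≠ ⊥) :
    ∀ b ∈ ⋃ k, E k, b ≠ ⊥ → ∃ m ∈ M, m ⊓ b ≠ ⊥ := by
  intro b hb hb0
  obtain ⟨_, ⟨k, rfl⟩, hbk⟩ := hb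
  set a := projSub (A k) b with ha
  have hle : b ≤ a := le_sInf fun x hx => hx.2
  have haA : a ∈ A k := hAinf k _ fun x hx => hx.1
  have ha0 : a ≠ ⊥ := fun h => hb0 (le_bot_iff.mp (h ▸ hle))
  obtain ⟨m, hm, hma⟩ := hmax a (Set.mem_iUnion.mpr ⟨k, haA⟩) ha0
  refine ⟨m, hm, ?_⟩
  obtain ⟨_, ⟨l, rfl⟩, hml⟩ := hMsub hm
  obtain ⟨n, hkn, hln⟩ := hdir k l
  have hmn : m ∈ A n := hAmono l n hln hml
  apply hcorrect k n hkn m hmn b hbk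
  have hmp : m ≤ projSub (A k) m := le_sInf fun x hx => hx.2
  intro h
  exact hma (le_bot_iff.mp (h ▸ inf_le_inf_right _ hmp))
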